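/- A subgroup H of Z_n × Z_n is a Lagrangian (i.e., H = H^{⊥s}) if and only if |H| = n. -/

import Mathlib

open Complex
open scoped Classical

/-- The character value `e^{2πi t/n}` for `t : ZMod n`. -/
noncomputable def charVal (n : ℕ) (t : ZMod n) : ℂ :=
  Complex.exp (2 * Real.pi * Complex.I * (t.val : ℂ) / (n : ℂ))

/-- The symplectic form `⟨x,y⟩ = x₁y₂ - x₂y₁` on `ZMod n × ZMod n`. -/
def sympForm {n : ℕ} (x y : ZMod n × ZMod n) : ZMod n :=
  x.1 * y.2 - x.2 * y.1

/-- Symplectic Fourier transform of the indicator of `A`. -/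
noncomputable def symFT {n : ℕ} (A : Set (ZMod n × ZMod n)) (ξ : ZMod n × ZMod n) : ℂ :=
  ∑ᶠ a ∈ A, charVal n (sympForm a ξ)

/-- Euclidean Fourier transform of the indicator of `A`. -/
noncomputable def euclFT {n : ℕ} (A : Set (ZMod n × ZMod n)) (ξ : ZMod n × ZMod n) : ℂ :=
  ∑ᶠ a ∈ A, charVal n (a.1 * ξ.1 + a.2 * ξ.2)

/-- Difference set `ΔA = {a - a' : a,a' ∈ A, a ≠ a'}`. -/
def diffSet {G : Type*} [AddGroup G] (A : Set G) : Set G :=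
  {d | ∃ a ∈ A, ∃ a' ∈ A, a ≠ a' ∧ d = a - a'}

/-- `A ⊕ B = G`: every element of `G` is uniquely a sum `a + b` with `a ∈ A`, `b ∈ B`. -/
def IsTilingPair {G : Type*} [AddCommGroup G] (A B : Set G) : Prop :=
  ∀ g : G, ∃! p : G × G, p.1 ∈ A ∧ p.2 ∈ B ∧ p.1 + p.2 = g

/-- Symplectic orthogonal set `H^{⊥s}`. -/
def sympPerp {n : ℕ} (H : Set (ZMod n × ZMod n)) : Set (ZMod n × ZMod n) :=
  {g | ∀ h ∈ H, sympForm g h = 0}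

/-- `(A,S)` is a symplectic spectral pair: `|A| = |S|` and `ΔS ⊆ Z(1̂_A^{sym})`. -/
def IsSympSpectralPair {n : ℕ} (A S : Set (ZMod n × ZMod n)) : Prop :=
  Nat.card A = Nat.card S ∧ ∀ s ∈ S, ∀ s' ∈ S, s ≠ s' → symFT A (s - s') = 0


noncomputable def redL (n : ℕ) : (ℤ × ℤ) →ₗ[ℤ] (ZMod n × ZMod n) :=
  ((Int.castRingHom (ZMod n)).toAddMonoidHom.prodMap
    (Int.castRingHom (ZMod n)).toAddMonoidHom).toIntLinearMap

lemma redL_apply (n : ℕ) (x : ℤ × ℤ) : redL n x = ((x.1 : ZMod n), (x.2 : ZMod n)) := rfl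

lemma exists_snf (n : ℕ) (hn : 0 < n) (H : AddSubgroup (ZMod n × ZMod n)) :
    ∃ (c : Fin 2 → ℤ × ℤ) (a : Fin 2 → ℤ),
      (∀ x : ℤ × ℤ, ∃ s t : ℤ, x = s • c 0 + t • c 1) ∧
      (∀ s t : ℤ, s • c 0 + t • c 1 = 0 → s = 0 ∧ t = 0) ∧
      (∀ x : ℤ × ℤ, (redL n x ∈ H ↔
        ∃ s t : ℤ, x = s • (a 0 • c 0) + t • (a 1 • c 1))) := by
  haveI : NeZero n := ⟨hn.ne'⟩
  set L : Submodule ℤ (ℤ × ℤ) := (AddSubgroup.toIntSubmodule H).comap (redL n) with hLdef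
  obtain ⟨m, snf⟩ := L.smithNormalForm ((Module.Basis.singleton Unit ℤ).prod (Module.Basis.singleton Unit ℤ))
  haveI : Module.Finite ℤ L := Module.Finite.of_basis snf.bN
  -- the scaling map into L
  have hmem : ∀ x : ℤ × ℤ, (n : ℤ) • x ∈ L := by
    intro x
    show redL n ((n : ℤ) • x) ∈ AddSubgroup.toIntSubmodule H
    rw [map_smul]
    have : (n : ℤ) • redL n x = 0 := by
      ext <;> simp [zsmul_eq_mul]
    rw [this]; exact zero_mem _
  have hinj : Function.Injective (LinearMap.codRestrict L ((n : ℤ) • (LinearMap.id : (ℤ × ℤ) →ₗ[ℤ] (ℤ × ℤ))) hmem) := by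
    intro x y hxy
    have h := congrArg Subtype.val hxy
    simp only [LinearMap.codRestrict_apply, LinearMap.smul_apply, LinearMap.id_apply] at h
    exact smul_right_injective (ℤ × ℤ) (by exact_mod_cast hn.ne' : (n : ℤ) ≠ 0) h
  have h2le : 2 ≤ Module.finrank ℤ L := by
    have := LinearMap.finrank_le_finrank_of_injective hinj
    have h2 : Module.finrank ℤ (ℤ × ℤ) = 2 := by
      simp [Module.finrank_prod]
    omega
  have hm2 : m = 2 := by
    have h1 : Module.finrank ℤ L = m := by
      rw [Module.finrank_eq_card_basis snf.bN, Fintype.card_fin]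
    have h3 : m ≤ 2 := by
      have := Fintype.card_le_of_embedding snf.f
      simpa using this
    omega
  subst hm2
  -- f is bijective
  have hfbij : Function.Bijective snf.f := by
    rw [Fintype.bijective_iff_injective_and_card]
    exact ⟨snf.f.injective, by simp⟩
  set e : Fin 2 ≃ (Unit ⊕ Unit) := Equiv.ofBijective snf.f hfbij with he
  set c : Fin 2 → ℤ × ℤ := fun i => snf.bM (snf.f i) with hc
  refine ⟨c, snf.a, ?_, ?_, ?_⟩
  · -- spanning
    intro x
    refine ⟨snf.bM.repr x (e 0), snf.bM.repr x (e 1), ?_⟩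
    have := snf.bM.sum_repr x
    rw [← Equiv.sum_comp e (fun j => snf.bM.repr x j • snf.bM j)] at this
    rw [Fin.sum_univ_two] at this
    simp only [hc, he, Equiv.ofBijective_apply] at this ⊢
    exact this.symm
  · -- independence
    intro s t hst
    have li : LinearIndependent ℤ c := snf.bM.linearIndependent.comp snf.f snf.f.injective
    have := Fintype.linearIndependent_iff.mp li ![s, t] (by
      rw [Fin.sum_univ_two]; simpa using hst)
    exact ⟨this 0, this 1⟩
  · -- membership
    intro x
    constructor
    · intro hx
      have hxL : x ∈ L := hx
      set y : L := ⟨x, hxL⟩ with hy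
      have := snf.bN.sum_repr y
      rw [Fin.sum_univ_two] at this
      refine ⟨snf.bN.repr y 0, snf.bN.repr y 1, ?_⟩
      have hcoe := congrArg (Subtype.val) this
      push_cast at hcoe
      rw [snf.snf 0, snf.snf 1] at hcoe
      exact hcoe.symm
    · rintro ⟨s, t, rfl⟩
      have h0 : (snf.a 0 • c 0) ∈ L := by rw [hc, ← snf.snf 0]; exact (snf.bN 0).2
      have h1 : (snf.a 1 • c 1) ∈ L := by rw [hc, ← snf.snf 1]; exact (snf.bN 1).2
      exact L.add_mem (L.smul_mem s h0) (L.smul_mem t h1)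


lemma card_mulker (n : ℕ) (hn : 0 < n) (a : ℤ) (ha : a.natAbs ∣ n) :
    Nat.card {u : ZMod n // (a : ZMod n) * u = 0} = a.natAbs := by
  haveI : NeZero n := ⟨hn.ne'⟩
  set μ : ZMod n →+ ZMod n := AddMonoidHom.mulLeft ((a : ZMod n)) with hμ
  have hcards : Nat.card (ZMod n) = Nat.card μ.range * Nat.card μ.ker := by
    rw [AddSubgroup.card_eq_card_quotient_mul_card_addSubgroup μ.ker]
    congr 1
    exact Nat.card_congr (QuotientAddGroup.quotientKerEquivRange μ).toEquiv
  have hrange : μ.range = AddSubgroup.zmultiples ((a : ZMod n)) := by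
    ext u
    simp only [AddMonoidHom.mem_range, AddSubgroup.mem_zmultiples_iff]
    constructor
    · rintro ⟨v, rfl⟩
      refine ⟨(v.val : ℤ), ?_⟩
      have : ((v.val : ℤ) : ZMod n) = v := by
        push_cast
        simp [ZMod.natCast_val, ZMod.cast_id]
      rw [← Int.cast_smul_eq_zsmul (ZMod n), this, hμ]
      simp [AddMonoidHom.mulLeft, mul_comm]
    · rintro ⟨k, rfl⟩
      exact ⟨(k : ZMod n), by simp [hμ, ← Int.cast_smul_eq_zsmul (ZMod n), smul_eq_mul, mul_comm]⟩
  have hord : addOrderOf ((a : ZMod n)) = n / a.natAbs := by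
    have habs : addOrderOf ((a.natAbs : ZMod n)) = n / a.natAbs := by
      rw [ZMod.addOrderOf_coe _ hn.ne', Nat.gcd_eq_right ha]
    rcases Int.natAbs_eq a with h | h
    · rw [h, Int.cast_natCast, habs]; simp [Int.natAbs_abs]
    · rw [h, Int.cast_neg, Int.cast_natCast, addOrderOf_neg, habs]; simp [Int.natAbs_abs]
  have hcard_range : Nat.card μ.range = n / a.natAbs := by
    rw [hrange, Nat.card_zmultiples, hord]
  have hα : 0 < a.natAbs := by
    rcases Nat.eq_zero_or_pos a.natAbs with h | h
    · exfalso; rw [h] at ha; omega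
    · exact h
  have hq : 0 < n / a.natAbs := Nat.div_pos (Nat.le_of_dvd hn ha) hα
  have hker_eq : Nat.card μ.ker = a.natAbs := by
    have h1 : n = (n / a.natAbs) * Nat.card μ.ker := by
      rw [Nat.card_zmod, hcard_range] at hcards; exact hcards
    have h2 : n = (n / a.natAbs) * a.natAbs := (Nat.div_mul_cancel ha).symm
    exact (Nat.eq_of_mul_eq_mul_left hq (h2.symm.trans h1)).symm
  rw [← hker_eq]
  apply Nat.card_congr
  apply Equiv.subtypeEquivRight
  intro u
  simp [hμ, AddMonoidHom.mem_ker, AddMonoidHom.mulLeft]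

lemma sympForm_bilin {n : ℕ} (g y z : ZMod n × ZMod n) (s t : ZMod n) :
    sympForm g (s • y + t • z) = s * sympForm g y + t * sympForm g z := by
  simp only [sympForm, Prod.fst_add, Prod.snd_add, Prod.smul_fst, Prod.smul_snd, smul_eq_mul]
  ring

lemma sympForm_zsmul {n : ℕ} (g y z : ZMod n × ZMod n) (s t : ℤ) :
    sympForm g (s • y + t • z) = s • sympForm g y + t • sympForm g z := by
  rw [← Int.cast_smul_eq_zsmul (ZMod n) s y, ← Int.cast_smul_eq_zsmul (ZMod n) t z,
    ← Int.cast_smul_eq_zsmul (ZMod n) s (sympForm g y),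
    ← Int.cast_smul_eq_zsmul (ZMod n) t (sympForm g z), smul_eq_mul, smul_eq_mul]
  exact sympForm_bilin g y z _ _

lemma key (n : ℕ) (hn : 0 < n) (H : AddSubgroup (ZMod n × ZMod n)) :
    ∃ α β : ℕ, α ∣ n ∧ β ∣ n ∧ Nat.card H * (α * β) = n ^ 2 ∧
      Nat.card (sympPerp (H : Set (ZMod n × ZMod n))) = α * β ∧
      (α * β = n → ∀ h ∈ H, ∀ h' ∈ H, sympForm h h' = 0) := by
  haveI : NeZero n := ⟨hn.ne'⟩
  obtain ⟨c, a, hspan, hindep, hmemb⟩ := exists_snf n hn H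
  set w : Fin 2 → ZMod n × ZMod n := fun i => redL n (c i) with hw
  set G : Fin 2 → ZMod n × ZMod n := fun i => ((a i : ZMod n)) • w i with hG
  have hredG : ∀ i, redL n (a i • c i) = G i := by
    intro i
    show redL n (a i • c i) = ((a i : ZMod n)) • (redL n (c i))
    rw [map_smul, Int.cast_smul_eq_zsmul]
  have hGmem : ∀ i, G i ∈ H := by
    intro i
    rw [← hredG]
    fin_cases i
    · exact (hmemb _).2 ⟨1, 0, by simp⟩
    · exact (hmemb _).2 ⟨0, 1, by simp⟩
  have hredsurj : ∀ g : ZMod n × ZMod n, ∃ x, redL n x = g := by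
    intro g
    refine ⟨((g.1.val : ℤ), (g.2.val : ℤ)), ?_⟩
    rw [redL_apply]
    have h1 : ∀ u : ZMod n, ((u.val : ℤ) : ZMod n) = u := by
      intro u; push_cast; simp [ZMod.natCast_val, ZMod.cast_id]
    rw [Prod.ext_iff]
    exact ⟨h1 g.1, h1 g.2⟩
  have hredker : ∀ x : ℤ × ℤ, redL n x = 0 → ∃ z : ℤ × ℤ, x = (n : ℤ) • z := by
    intro x hx
    rw [redL_apply, Prod.ext_iff] at hx
    obtain ⟨h1, h2⟩ := hx
    rw [Prod.fst_zero] at h1; rw [Prod.snd_zero] at h2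
    obtain ⟨k1, hk1⟩ := (ZMod.intCast_zmod_eq_zero_iff_dvd _ n).1 h1
    obtain ⟨k2, hk2⟩ := (ZMod.intCast_zmod_eq_zero_iff_dvd _ n).1 h2
    exact ⟨(k1, k2), by rw [Prod.ext_iff]; exact ⟨hk1, hk2⟩⟩
  -- membership in H via G
  have hH : ∀ g, g ∈ H ↔ ∃ s t : ZMod n, g = s • G 0 + t • G 1 := by
    intro g
    constructor
    · intro hg
      obtain ⟨x, rfl⟩ := hredsurj g
      obtain ⟨s, t, rfl⟩ := (hmemb x).1 hg
      refine ⟨(s : ZMod n), (t : ZMod n), ?_⟩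
      rw [map_add, map_smul (redL n) s (a 0 • c 0), map_smul (redL n) t (a 1 • c 1),
        hredG 0, hredG 1, Int.cast_smul_eq_zsmul (ZMod n) s (G 0),
        Int.cast_smul_eq_zsmul (ZMod n) t (G 1)]
    · rintro ⟨s, t, rfl⟩
      have hsm : ∀ (σ : ZMod n) (h : ZMod n × ZMod n), h ∈ H → σ • h ∈ H := by
        intro σ h hh
        have : σ • h = σ.val • h := by
          rw [← Nat.cast_smul_eq_nsmul (ZMod n) σ.val h, ZMod.natCast_val, ZMod.cast_id]
        rw [this]
        exact AddSubgroup.nsmul_mem H hh σ.val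
      exact H.add_mem (hsm s _ (hGmem 0)) (hsm t _ (hGmem 1))
  -- independence of w over ZMod n
  have hWindep : ∀ σ τ : ZMod n, σ • w 0 + τ • w 1 = 0 → σ = 0 ∧ τ = 0 := by
    intro σ τ h
    set s : ℤ := (σ.val : ℤ) with hs
    set t : ℤ := (τ.val : ℤ) with ht
    have hσ : ((s : ℤ) : ZMod n) = σ := by rw [hs]; push_cast; simp [ZMod.natCast_val, ZMod.cast_id]
    have hτ : ((t : ℤ) : ZMod n) = τ := by rw [ht]; push_cast; simp [ZMod.natCast_val, ZMod.cast_id]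
    have h2 : redL n (s • c 0 + t • c 1) = 0 := by
      rw [map_add, map_smul, map_smul]
      rw [← Int.cast_smul_eq_zsmul (ZMod n) s, ← Int.cast_smul_eq_zsmul (ZMod n) t, hσ, hτ]
      exact h
    obtain ⟨z, hz⟩ := hredker _ h2
    obtain ⟨z0, z1, hz01⟩ := hspan z
    have e1 : s • c 0 + t • c 1 = (n * z0) • c 0 + (n * z1) • c 1 := by
      rw [hz, hz01, smul_add, smul_smul, smul_smul]
    have e2 : (s - n * z0) • c 0 + (t - n * z1) • c 1 = 0 := by
      rw [sub_smul, sub_smul, sub_add_sub_comm, e1, sub_self]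
    obtain ⟨e3, e4⟩ := hindep _ _ e2
    have hs0 : s = n * z0 := by omega
    have ht0 : t = n * z1 := by omega
    constructor
    · rw [← hσ, hs0]; push_cast; simp
    · rw [← hτ, ht0]; push_cast; simp
  -- divisibility
  have hmemn : ∀ i : Fin 2, redL n ((n : ℤ) • c i) ∈ H := by
    intro i
    rw [map_smul]
    have : (n : ℤ) • redL n (c i) = 0 := by
      rw [← Int.cast_smul_eq_zsmul (ZMod n)]
      simp
    rw [this]; exact H.zero_mem
  have hadvd0 : (a 0).natAbs ∣ n := by
    obtain ⟨s, t, hst⟩ := (hmemb _).1 (hmemn 0)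
    have hst' : (n : ℤ) • c 0 = (s * a 0) • c 0 + (t * a 1) • c 1 := by
      rw [hst, smul_smul, smul_smul]
    have e2 : ((n : ℤ) - s * a 0) • c 0 + (0 - t * a 1) • c 1 = 0 := by
      rw [sub_smul, sub_smul, sub_add_sub_comm, zero_smul, add_zero, ← hst', sub_self]
    obtain ⟨e3, e4⟩ := hindep _ _ e2
    have h5 : (n : ℤ) = s * a 0 := by omega
    have h6 : a 0 ∣ (n : ℤ) := Dvd.intro_left s h5.symm
    have := Int.natAbs_dvd_natAbs.2 h6
    simpa using this
  have hadvd1 : (a 1).natAbs ∣ n := by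
    obtain ⟨s, t, hst⟩ := (hmemb _).1 (hmemn 1)
    have hst' : (n : ℤ) • c 1 = (s * a 0) • c 0 + (t * a 1) • c 1 := by
      rw [hst, smul_smul, smul_smul]
    have e2 : (0 - s * a 0) • c 0 + ((n : ℤ) - t * a 1) • c 1 = 0 := by
      rw [sub_smul, sub_smul, sub_add_sub_comm, zero_smul, zero_add, ← hst', sub_self]
    obtain ⟨e3, e4⟩ := hindep _ _ e2
    have h5 : (n : ℤ) = t * a 1 := by omega
    have h6 : a 1 ∣ (n : ℤ) := Dvd.intro_left t h5.symm
    have := Int.natAbs_dvd_natAbs.2 h6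
    simpa using this
  -- the model kernel set T
  set T : Set (ZMod n × ZMod n) :=
    {p | ((a 0 : ZMod n)) * p.1 = 0 ∧ ((a 1 : ZMod n)) * p.2 = 0} with hT
  have cardT : Nat.card T = (a 0).natAbs * (a 1).natAbs := by
    have e1 : ↥T ≃ {p : ZMod n × ZMod n //
        ((a 0 : ZMod n)) * p.1 = 0 ∧ ((a 1 : ZMod n)) * p.2 = 0} :=
      Equiv.subtypeEquivRight (fun p => Iff.rfl)
    have e2 : {p : ZMod n × ZMod n //
        ((a 0 : ZMod n)) * p.1 = 0 ∧ ((a 1 : ZMod n)) * p.2 = 0} ≃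
        {u : ZMod n // (a 0 : ZMod n) * u = 0} × {u : ZMod n // (a 1 : ZMod n) * u = 0} :=
      Equiv.subtypeProdEquivProd (p := fun u => (a 0 : ZMod n) * u = 0)
        (q := fun u => (a 1 : ZMod n) * u = 0)
    rw [Nat.card_congr (e1.trans e2), Nat.card_prod, card_mulker n hn _ hadvd0, card_mulker n hn _ hadvd1]
  -- kernel characterization
  have hkerT : ∀ s t : ZMod n,
      (s • G 0 + t • G 1 = 0) ↔ ((a 0 : ZMod n) * s = 0 ∧ (a 1 : ZMod n) * t = 0) := by
    intro s t
    have hsG0 : s • G 0 = (s * (a 0 : ZMod n)) • w 0 := by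
      show s • (((a 0 : ZMod n)) • w 0) = _
      rw [smul_smul]
    have htG1 : t • G 1 = (t * (a 1 : ZMod n)) • w 1 := by
      show t • (((a 1 : ZMod n)) • w 1) = _
      rw [smul_smul]
    constructor
    · intro h
      rw [hsG0, htG1] at h
      obtain ⟨h1, h2⟩ := hWindep _ _ h
      exact ⟨by rw [mul_comm]; exact h1, by rw [mul_comm]; exact h2⟩
    · rintro ⟨h1, h2⟩
      rw [hsG0, htG1, mul_comm s, mul_comm t, h1, h2, zero_smul, zero_smul, add_zero]
  -- the parametrizing linear map
  set φ : (ZMod n × ZMod n) →ₗ[ZMod n] (ZMod n × ZMod n) :=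
    (LinearMap.toSpanSingleton (ZMod n) _ (G 0)).coprod
      (LinearMap.toSpanSingleton (ZMod n) _ (G 1)) with hφ
  set φ' := φ.toAddMonoidHom with hφ'
  have hφapp : ∀ p : ZMod n × ZMod n, φ' p = p.1 • G 0 + p.2 • G 1 := by
    intro p
    show φ p = _
    rw [hφ, LinearMap.coprod_apply, LinearMap.toSpanSingleton_apply,
      LinearMap.toSpanSingleton_apply]
  have hrange : φ'.range = H := by
    ext g
    rw [AddMonoidHom.mem_range]
    constructor
    · rintro ⟨p, rfl⟩
      exact (hH _).2 ⟨p.1, p.2, (hφapp p).symm⟩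
    · intro hg
      obtain ⟨s, t, rfl⟩ := (hH g).1 hg
      exact ⟨(s, t), hφapp (s, t)⟩
  have hkerφ : ∀ p, p ∈ φ'.ker ↔ p ∈ T := by
    intro p
    rw [AddMonoidHom.mem_ker, hφapp]
    exact hkerT p.1 p.2
  have hcount : (n ^ 2 : ℕ) = Nat.card H * Nat.card T := by
    have h1 := AddSubgroup.card_eq_card_quotient_mul_card_addSubgroup φ'.ker
    rw [Nat.card_congr (QuotientAddGroup.quotientKerEquivRange φ').toEquiv] at h1
    rw [hrange] at h1
    have h2 : Nat.card φ'.ker = Nat.card T := Nat.card_congr (Equiv.subtypeEquivRight hkerφ)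
    rw [h2, Nat.card_prod, Nat.card_zmod] at h1
    rw [← h1]; ring
  -- the symplectic evaluation map
  have sympForm_smul : ∀ (g y : ZMod n × ZMod n) (σ : ZMod n),
      sympForm g (σ • y) = σ * sympForm g y := by
    intro g y σ
    simp only [sympForm, Prod.smul_fst, Prod.smul_snd, smul_eq_mul]
    ring
  set Ψ : (ZMod n × ZMod n) → (ZMod n × ZMod n) :=
    fun g => (sympForm g (w 0), sympForm g (w 1)) with hΨ
  have hΨinj : Function.Injective Ψ := by
    intro g g' hgg
    have hw0 : sympForm g (w 0) = sympForm g' (w 0) := congrArg Prod.fst hgg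
    have hw1 : sympForm g (w 1) = sympForm g' (w 1) := congrArg Prod.snd hgg
    have hall : ∀ y, sympForm g y = sympForm g' y := by
      intro y
      obtain ⟨x, rfl⟩ := hredsurj y
      obtain ⟨s, t, rfl⟩ := hspan x
      rw [map_add, map_smul, map_smul, sympForm_zsmul, sympForm_zsmul, hw0, hw1,
        ← sympForm_zsmul, ← map_smul, ← map_smul, ← map_add]
    have h1 := hall (0, 1)
    have h2 := hall (1, 0)
    simp only [sympForm, mul_one, mul_zero, zero_mul, sub_zero, zero_sub, neg_inj] at h1 h2
    exact Prod.ext h1 h2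
  have hΨbij : Function.Bijective Ψ := Finite.injective_iff_bijective.1 hΨinj
  have hperpiff : ∀ g, g ∈ sympPerp (H : Set (ZMod n × ZMod n)) ↔ Ψ g ∈ T := by
    intro g
    have e0 : sympForm g (G 0) = (a 0 : ZMod n) * sympForm g (w 0) := sympForm_smul g (w 0) _
    have e1 : sympForm g (G 1) = (a 1 : ZMod n) * sympForm g (w 1) := sympForm_smul g (w 1) _
    constructor
    · intro hg
      constructor
      · rw [show (Ψ g).1 = sympForm g (w 0) from rfl, ← e0]
        exact hg (G 0) (hGmem 0)
      · rw [show (Ψ g).2 = sympForm g (w 1) from rfl, ← e1]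
        exact hg (G 1) (hGmem 1)
    · rintro ⟨h1, h2⟩ h hh
      obtain ⟨s, t, rfl⟩ := (hH h).1 hh
      rw [sympForm_bilin, e0, e1]
      rw [show sympForm g (w 0) = (Ψ g).1 from rfl] at *
      rw [show sympForm g (w 1) = (Ψ g).2 from rfl]
      rw [h1, h2, mul_zero, mul_zero, add_zero]
  have cardPerp : Nat.card (sympPerp (H : Set (ZMod n × ZMod n)))
      = (a 0).natAbs * (a 1).natAbs := by
    rw [← cardT]
    exact Nat.card_congr (Equiv.subtypeEquiv (Equiv.ofBijective Ψ hΨbij)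
      (fun g => by rw [Equiv.ofBijective_apply]; exact hperpiff g))
  -- isotropy
  have hiso : (a 0).natAbs * (a 1).natAbs = n →
      ∀ h ∈ H, ∀ h' ∈ H, sympForm h h' = 0 := by
    intro hab h hh h' hh'
    obtain ⟨x, rfl⟩ := hredsurj h
    obtain ⟨y, rfl⟩ := hredsurj h'
    obtain ⟨s, t, hx⟩ := (hmemb x).1 hh
    obtain ⟨s', t', hy⟩ := (hmemb y).1 hh'
    have hcast : sympForm (redL n x) (redL n y) = ((x.1 * y.2 - x.2 * y.1 : ℤ) : ZMod n) := by
      rw [redL_apply, redL_apply]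
      simp only [sympForm]
      push_cast
      ring
    have hx1 : x.1 = s * (a 0 * (c 0).1) + t * (a 1 * (c 1).1) := by
      rw [hx]; simp [smul_eq_mul]
    have hx2 : x.2 = s * (a 0 * (c 0).2) + t * (a 1 * (c 1).2) := by
      rw [hx]; simp [smul_eq_mul]
    have hy1 : y.1 = s' * (a 0 * (c 0).1) + t' * (a 1 * (c 1).1) := by
      rw [hy]; simp [smul_eq_mul]
    have hy2 : y.2 = s' * (a 0 * (c 0).2) + t' * (a 1 * (c 1).2) := by
      rw [hy]; simp [smul_eq_mul]
    have hD : x.1 * y.2 - x.2 * y.1 =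
        (a 0 * a 1) * ((s * t' - t * s') * ((c 0).1 * (c 1).2 - (c 0).2 * (c 1).1)) := by
      rw [hx1, hx2, hy1, hy2]; ring
    have hn' : (n : ℤ) ∣ a 0 * a 1 := by
      have habs : ((a 0 * a 1).natAbs : ℤ) = (n : ℤ) := by
        rw [Int.natAbs_mul, hab]
      rw [← habs]
      exact Int.natAbs_dvd.2 dvd_rfl
    rw [hcast, ZMod.intCast_zmod_eq_zero_iff_dvd, hD]
    exact hn'.mul_right _
  exact ⟨(a 0).natAbs, (a 1).natAbs, hadvd0, hadvd1,
    by rw [← cardT]; exact hcount.symm, cardPerp, hiso⟩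

theorem lagrangian_iff_card (n : ℕ) (hn : 0 < n) (H : AddSubgroup (ZMod n × ZMod n)) :
    (H : Set (ZMod n × ZMod n)) = sympPerp (H : Set (ZMod n × ZMod n)) ↔
      Nat.card H = n := by
  haveI : NeZero n := ⟨hn.ne'⟩
  obtain ⟨α, β, hα, hβ, hcard, hperp, hiso⟩ := key n hn H
  have hbridge : Nat.card ((H : Set (ZMod n × ZMod n)) : Set (ZMod n × ZMod n)) = Nat.card H :=
    Nat.card_congr (Equiv.subtypeEquivRight (fun x => Iff.rfl))
  constructor
  · intro hEq
    have h1 : Nat.card H = α * β := by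
      rw [← hbridge, hEq, hperp]
    rw [h1] at hcard
    have h2 : (α * β) ^ 2 = n ^ 2 := by rw [pow_two]; exact hcard
    have h3 : α * β = n := Nat.pow_left_injective (by norm_num) h2
    rw [h1, h3]
  · intro hc
    have hab : α * β = n := by
      rw [hc] at hcard
      have h1 : n * (α * β) = n * n := by rw [hcard, pow_two]
      exact Nat.eq_of_mul_eq_mul_left hn h1
    have hsub : (H : Set (ZMod n × ZMod n)) ⊆ sympPerp (H : Set (ZMod n × ZMod n)) := by
      intro h hh h' hh'
      exact hiso hab h hh h' hh'
    have e1 : (sympPerp (H : Set (ZMod n × ZMod n))).ncard = n := by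
      rw [← Nat.card_coe_set_eq, hperp, hab]
    have e2 : ((H : Set (ZMod n × ZMod n))).ncard = n := by
      rw [← Nat.card_coe_set_eq, hbridge, hc]
    exact Set.eq_of_subset_of_ncard_le hsub (by rw [e1, e2]) (Set.toFinite _)
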